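/- Let η and ψ be as given, let 1/2 < β < 1 and W = η^β/𝔼[η^β]. Then inf_{1/2 ≤ t ≤ 1} log 𝔼[b^{1−t} W^{2t}]/(t log b) = 1 − 2ψ(β)/log b; consequently, since such W is squared super-critical, D_F(W,b) = 2ψ(β)/log b. -/

import Mathlib

open MeasureTheory ProbabilityTheory Filter Topology
open scoped ENNReal NNReal

noncomputable section

namespace MCCM

/-- Left endpoint of the `b`-adic interval indexed by the word `u` of length `n`. -/
def adicLeft (b n : ℕ) (u : Fin n → Fin b) : ℝ :=
  ∑ k : Fin n, (u k : ℝ) / (b : ℝ) ^ ((k : ℕ) + 1)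

/-- The `b`-adic interval `I_u` indexed by the word `u`. -/
def adicI (b n : ℕ) (u : Fin n → Fin b) : Set ℝ :=
  Set.Ico (adicLeft b n u) (adicLeft b n u + 1 / (b : ℝ) ^ n)

/-- The prefix of length `j` of the word `u`, as a list. -/
def wordPrefix (b n : ℕ) (u : Fin n → Fin b) (j : ℕ) : List (Fin b) :=
  (List.ofFn u).take j

/-- The complex exponential `e^{-2πi t ζ}`. -/
def eker (ζ t : ℝ) : ℂ :=
  Complex.exp ((-(2 * Real.pi * t * ζ) : ℝ) * Complex.I)

/-- Fourier transform of a measure on `ℝ`. -/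
def ft (μ : Measure ℝ) (ζ : ℝ) : ℂ := ∫ t, eker ζ t ∂μ

/-- The Fourier dimension of a measure on `ℝ`. -/
def fourierDim (μ : Measure ℝ) : ℝ :=
  sSup {D : ℝ | D ∈ Set.Icc (0 : ℝ) 1 ∧
    ∃ c : ℝ, 0 < c ∧ ∀ ζ : ℝ, ‖ft μ ζ‖ ≤ c * (1 + |ζ|) ^ (-D / 2)}

variable {Ω : Type*} [MeasureSpace Ω]

/-- The product of the weights over the prefixes `u|_j`, `j = 0, …, n`. -/
def cascadeWeight (b : ℕ) (WF : List (Fin b) → Ω → ℝ) (n : ℕ) (u : Fin n → Fin b) (ω : Ω) : ℝ :=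
  ∏ j ∈ Finset.range (n + 1), WF (wordPrefix b n u j) ω

/-- The random cascade measure `μ_n`. -/
def cascadeMeasure (b : ℕ) (WF : List (Fin b) → Ω → ℝ) (n : ℕ) (ω : Ω) : Measure ℝ :=
  volume.withDensity fun t => ENNReal.ofReal
    (∑ u : Fin n → Fin b, cascadeWeight b WF n u ω * (adicI b n u).indicator (fun _ => (1 : ℝ)) t)

/-- `W` is a random cascade weight: nonnegative, mean one, non-constant. -/
structure IsWeight (b : ℕ) (W : Ω → ℝ) : Prop where
  two_le : 2 ≤ b
  meas : Measurable W
  nonneg : ∀ ω, 0 ≤ W ω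
  integrable : Integrable W
  mean_one : (∫ ω, W ω) = 1
  nonconst : ∀ c : ℝ, ¬ (∀ᵐ ω : Ω, W ω = c)

/-- `WF` is a family of i.i.d. copies of `W` indexed by the nonempty words, with `WF ∅ ≡ 1`. -/
structure IsCopies (b : ℕ) (W : Ω → ℝ) (WF : List (Fin b) → Ω → ℝ) : Prop where
  root : ∀ ω, WF [] ω = 1
  meas : ∀ u, Measurable (WF u)
  nonneg : ∀ u ω, 0 ≤ WF u ω
  ident : ∀ u : List (Fin b), u ≠ [] → Measure.map (WF u) ℙ = Measure.map W ℙ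
  indep : iIndepFun
    (fun u : {u : List (Fin b) // u ≠ []} => WF u.1) ℙ

/-- `μlim` is a random finite measure on `[0,1]` which is almost surely
the weak limit of the cascade measures `μ_n`. -/
structure IsCascadeLimit (b : ℕ) (WF : List (Fin b) → Ω → ℝ) (μlim : Ω → Measure ℝ) : Prop where
  finite : ∀ ω, IsFiniteMeasure (μlim ω)
  support : ∀ ω, μlim ω (Set.Icc (0 : ℝ) 1)ᶜ = 0
  weak : ∀ᵐ ω : Ω, ∀ f : ℝ → ℝ, Continuous f →
    Tendsto (fun n => ∫ t, f t ∂ (cascadeMeasure b WF n ω)) atTop (𝓝 (∫ t, f t ∂ (μlim ω)))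

/-- `𝔼[W²]`. -/
def eW2 (W : Ω → ℝ) : ℝ := ∫ ω, (W ω) ^ 2

/-- `𝔼[W⁽²⁾ log W⁽²⁾]` where `W⁽²⁾ = W²/𝔼[W²]`. -/
def sqLogMoment (W : Ω → ℝ) : ℝ :=
  ∫ ω, ((W ω) ^ 2 / eW2 W) * Real.log ((W ω) ^ 2 / eW2 W)

open Classical in
/-- The quantity `D_F(W, b)`. -/
def DF (b : ℕ) (W : Ω → ℝ) : ℝ :=
  if sqLogMoment W ≤ Real.log b then 1 - Real.log (eW2 W) / Real.log b
  else 1 - ⨅ t : Set.Icc (1/2 : ℝ) 1,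
    Real.log (∫ ω, (b : ℝ) ^ (1 - (t : ℝ)) * (W ω) ^ (2 * (t : ℝ))) / ((t : ℝ) * Real.log b)

/-- `log W` is non-lattice. -/
def NonLattice (W : Ω → ℝ) : Prop :=
  ¬ ∃ a d : ℝ, ∀ᵐ ω : Ω, 0 < W ω → ∃ k : ℤ, Real.log (W ω) = a + d * k

end MCCM

namespace MCCM

variable {Ω : Type*} [MeasureSpace Ω]

/-- `η` is a boundary-case environment: `η ≥ 0`, `𝔼[η] = 1/b`, `𝔼[η log η] = 0`,
`ℙ(η > 1) > 0` and `𝔼[η^t] < ∞` for all `t > 0`  (`η = e^{−ξ}` in the paper's notation). -/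
structure IsBoundaryEnv (b : ℕ) (η : Ω → ℝ) : Prop where
  two_le : 2 ≤ b
  meas : Measurable η
  nonneg : ∀ ω, 0 ≤ η ω
  mean : (∫ ω, η ω) = 1 / b
  loglin : (∫ ω, η ω * Real.log (η ω)) = 0
  pos : 0 < ℙ {ω : Ω | 1 < η ω}
  mom : ∀ t : ℝ, 0 < t → Integrable fun ω => η ω ^ t

/-- `ψ(t) = log 𝔼[b η^t]`. -/
def psiFun (b : ℕ) (η : Ω → ℝ) (t : ℝ) : ℝ :=
  Real.log (∫ ω, (b : ℝ) * η ω ^ t)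

/-- The Biggins–Kyprianou weight `W = η^β/𝔼[η^β]`. -/
def bkWeight (η : Ω → ℝ) (β : ℝ) (ω : Ω) : ℝ :=
  η ω ^ β / (∫ ω', η ω' ^ β)


section AuxLemmas

lemma aux_rpow_one_add {x : ℝ} (h : 0 < x) (s : ℝ) : x * x ^ (s - 1) = x ^ s := by
  have h1 := (Real.rpow_add h 1 (s - 1)).symm
  rw [Real.rpow_one] at h1
  rw [h1]; congr 1; ring

lemma aux_rpow_tangent {s x : ℝ} (hs : 0 < s) (hx : 0 ≤ x) :
    x + (s - 1) * (x * Real.log x) ≤ x ^ s := by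
  rcases hx.eq_or_lt with h | h
  · rw [← h, Real.zero_rpow hs.ne']; simp
  · have h1 : (s - 1) * Real.log x + 1 ≤ Real.exp ((s - 1) * Real.log x) :=
      Real.add_one_le_exp _
    have h2 : Real.exp ((s - 1) * Real.log x) = x ^ (s - 1) := by
      rw [Real.rpow_def_of_pos h, mul_comm]
    have h3 := aux_rpow_one_add h s
    rw [h2] at h1
    nlinarith [mul_le_mul_of_nonneg_left h1 h.le]

lemma aux_rpow_tangent_lt {s x : ℝ} (hs1 : s ≠ 1) (hx : 1 < x) :
    x + (s - 1) * (x * Real.log x) < x ^ s := by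
  have h : (0:ℝ) < x := by linarith
  have hlog : 0 < Real.log x := Real.log_pos hx
  have h1 : (s - 1) * Real.log x + 1 < Real.exp ((s - 1) * Real.log x) :=
    Real.add_one_lt_exp (by
      intro hc
      rcases mul_eq_zero.mp hc with hc | hc
      · exact hs1 (by linarith [sub_eq_zero.mp hc])
      · exact hlog.ne' hc)
  have h2 : Real.exp ((s - 1) * Real.log x) = x ^ (s - 1) := by
    rw [Real.rpow_def_of_pos h, mul_comm]
  have h3 := aux_rpow_one_add h s
  rw [h2] at h1
  nlinarith [mul_lt_mul_of_pos_left h1 h]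

lemma aux_gibbs {u v : ℝ} (hu : 0 < u) (hv : 0 < v) :
    u - v ≤ u * (Real.log u - Real.log v) := by
  have h := Real.log_le_sub_one_of_pos (div_pos hv hu)
  rw [Real.log_div hv.ne' hu.ne'] at h
  have h2 := mul_le_mul_of_nonneg_left h hu.le
  have h3 : u * (v / u) = v := by field_simp
  nlinarith

lemma aux_abs_log_le_add_inv {y : ℝ} (hy : 0 < y) : |Real.log y| ≤ y + y⁻¹ := by
  have hinv : 0 < y⁻¹ := inv_pos.mpr hy
  rcases le_or_gt 1 y with h | h
  · have h0 : Real.log y ≤ y - 1 := Real.log_le_sub_one_of_pos hy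
    rw [abs_of_nonneg (Real.log_nonneg h)]
    linarith
  · have h0 : Real.log y⁻¹ ≤ y⁻¹ - 1 := Real.log_le_sub_one_of_pos hinv
    rw [Real.log_inv] at h0
    rw [abs_of_nonpos (Real.log_nonpos hy.le h.le)]
    linarith

lemma aux_rpow_mul_abs_log_le {s x : ℝ} (hs : 0 < s) (hx : 0 ≤ x) :
    |x ^ s * Real.log x| ≤ (2 / s) * (x ^ (3 * s / 2) + x ^ (s / 2)) := by
  rcases hx.eq_or_lt with h | h
  · rw [← h, Real.zero_rpow hs.ne', Real.zero_rpow (by positivity : (3 : ℝ) * s / 2 ≠ 0),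
      Real.zero_rpow (by positivity : s / 2 ≠ 0)]
    simp
  · have hxs : 0 < x ^ s := Real.rpow_pos_of_pos h _
    have hhalf : (0 : ℝ) < x ^ (s / 2) := Real.rpow_pos_of_pos h _
    have hb := aux_abs_log_le_add_inv hhalf
    rw [← Real.rpow_neg h.le, Real.log_rpow h, abs_mul,
      abs_of_nonneg (by positivity : (0:ℝ) ≤ s / 2)] at hb
    have h1 : x ^ s * x ^ (s / 2) = x ^ (3 * s / 2) := by
      rw [← Real.rpow_add h]; congr 1; ring
    have h2 : x ^ s * x ^ (-(s / 2)) = x ^ (s / 2) := by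
      rw [← Real.rpow_add h]; congr 1; ring
    have h3 : |Real.log x| ≤ (2 / s) * (x ^ (s / 2) + x ^ (-(s / 2))) := by
      rw [div_mul_eq_mul_div, le_div_iff₀ hs]
      linarith
    calc |x ^ s * Real.log x| = x ^ s * |Real.log x| := by
          rw [abs_mul, abs_of_nonneg hxs.le]
      _ ≤ x ^ s * ((2 / s) * (x ^ (s / 2) + x ^ (-(s / 2)))) :=
          mul_le_mul_of_nonneg_left h3 hxs.le
      _ = (2 / s) * (x ^ s * x ^ (s / 2) + x ^ s * x ^ (-(s / 2))) := by ring
      _ = (2 / s) * (x ^ (3 * s / 2) + x ^ (s / 2)) := by rw [h1, h2]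

variable {Ω' : Type*} [MeasureSpace Ω'] {b : ℕ} {η : Ω' → ℝ}

lemma aux_integrable_rpow_mul_log (henv : IsBoundaryEnv b η) {s : ℝ} (hs : 0 < s) :
    Integrable (fun ω => η ω ^ s * Real.log (η ω)) := by
  have h1 := henv.mom (3 * s / 2) (by positivity)
  have h2 := henv.mom (s / 2) (by positivity)
  refine ((h1.add h2).const_mul (2 / s)).mono ?_ (ae_of_all _ fun ω => ?_)
  · have hm1 : Measurable (fun ω => η ω ^ s) := by
      have := henv.meas; fun_prop
    have hm2 : Measurable (fun ω => Real.log (η ω)) := Real.measurable_log.comp henv.meas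
    exact (hm1.mul hm2).aestronglyMeasurable
  · rw [Real.norm_eq_abs, Real.norm_eq_abs]
    exact (aux_rpow_mul_abs_log_le hs (henv.nonneg ω)).trans (le_abs_self _)

lemma aux_integrable_eta (henv : IsBoundaryEnv b η) : Integrable η := by
  have := henv.mom 1 one_pos
  simpa [Real.rpow_one] using this

lemma aux_integrable_eta_log (henv : IsBoundaryEnv b η) :
    Integrable (fun ω => η ω * Real.log (η ω)) := by
  have := aux_integrable_rpow_mul_log henv one_pos
  simpa [Real.rpow_one] using this

lemma aux_base_integrable (henv : IsBoundaryEnv b η) (s : ℝ) :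
    Integrable (fun ω => η ω + (s - 1) * (η ω * Real.log (η ω))) :=
  (aux_integrable_eta henv).add ((aux_integrable_eta_log henv).const_mul (s - 1))

lemma aux_base_integral (henv : IsBoundaryEnv b η) (s : ℝ) :
    (∫ ω, (η ω + (s - 1) * (η ω * Real.log (η ω)))) = 1 / b := by
  rw [integral_add (aux_integrable_eta henv) ((aux_integrable_eta_log henv).const_mul (s - 1)),
    integral_const_mul, henv.mean, henv.loglin, mul_zero, add_zero]

lemma aux_moment_ge (henv : IsBoundaryEnv b η) {s : ℝ} (hs : 0 < s) :
    1 / (b : ℝ) ≤ ∫ ω, η ω ^ s := by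
  have hmono := integral_mono (aux_base_integrable henv s) (henv.mom s hs)
    (fun ω => aux_rpow_tangent hs (henv.nonneg ω))
  rwa [aux_base_integral henv s] at hmono

lemma aux_moment_gt (henv : IsBoundaryEnv b η) {s : ℝ} (hs : 0 < s) (hs1 : s ≠ 1) :
    1 / (b : ℝ) < ∫ ω, η ω ^ s := by
  set g : Ω' → ℝ := fun ω => η ω ^ s - (η ω + (s - 1) * (η ω * Real.log (η ω))) with hgdef
  have hgint : Integrable g := (henv.mom s hs).sub (aux_base_integrable henv s)
  have hgnn : 0 ≤ g := fun ω => sub_nonneg.mpr (aux_rpow_tangent hs (henv.nonneg ω))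
  have hpos : 0 < ∫ ω, g ω := by
    rw [integral_pos_iff_support_of_nonneg hgnn hgint]
    refine lt_of_lt_of_le henv.pos (measure_mono ?_)
    intro ω hω
    exact ne_of_gt (sub_pos.mpr (aux_rpow_tangent_lt hs1 hω))
  have hsub : (∫ ω, g ω) = (∫ ω, η ω ^ s) - 1 / b := by
    rw [hgdef]
    rw [integral_sub (henv.mom s hs) (aux_base_integrable henv s), aux_base_integral henv s]
  linarith [hsub ▸ hpos]

lemma aux_key_ineq [IsProbabilityMeasure (ℙ : Measure Ω')] (henv : IsBoundaryEnv b η)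
    {s : ℝ} (hs : 1 < s) :
    (∫ ω, η ω ^ s) * Real.log ((b : ℝ) * ∫ ω, η ω ^ s)
      < s * ∫ ω, η ω ^ s * Real.log (η ω) := by
  have hs0 : (0:ℝ) < s := by linarith
  have hb2 : (2:ℝ) ≤ (b:ℝ) := by exact_mod_cast henv.two_le
  have hbpos : (0:ℝ) < b := by linarith
  set m := ∫ ω, η ω ^ s with hm
  set E := ∫ ω, η ω ^ s * Real.log (η ω) with hE
  have hm1 : 1 / (b:ℝ) < m := aux_moment_gt henv hs0 (ne_of_gt hs)
  have hmpos : 0 < m := lt_trans (by positivity) hm1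
  have hbm : 1 < (b:ℝ) * m := by
    have := mul_lt_mul_of_pos_left hm1 hbpos
    rwa [mul_one_div, div_self hbpos.ne'] at this
  have hlogbm : 0 < Real.log ((b:ℝ) * m) := Real.log_pos hbm
  have hpt : ∀ ω, η ω ^ s - ((b:ℝ) * m) * η ω
      ≤ (s - 1) * (η ω ^ s * Real.log (η ω)) - Real.log ((b:ℝ) * m) * η ω ^ s := by
    intro ω
    rcases (henv.nonneg ω).eq_or_lt with h | h
    · rw [← h, Real.zero_rpow hs0.ne']; simp
    · have hu : 0 < η ω ^ s := Real.rpow_pos_of_pos h s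
      have hv : 0 < ((b:ℝ) * m) * η ω := by positivity
      have hgb := aux_gibbs hu hv
      rw [Real.log_rpow h, Real.log_mul (by positivity) (ne_of_gt h)] at hgb
      nlinarith [hgb]
  have hint1 : Integrable (fun ω => η ω ^ s - ((b:ℝ) * m) * η ω) :=
    (henv.mom s hs0).sub ((aux_integrable_eta henv).const_mul _)
  have hint2 : Integrable (fun ω =>
      (s - 1) * (η ω ^ s * Real.log (η ω)) - Real.log ((b:ℝ) * m) * η ω ^ s) :=
    ((aux_integrable_rpow_mul_log henv hs0).const_mul _).sub ((henv.mom s hs0).const_mul _)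
  have hmono := integral_mono hint1 hint2 hpt
  rw [integral_sub (henv.mom s hs0) ((aux_integrable_eta henv).const_mul _),
    integral_sub ((aux_integrable_rpow_mul_log henv hs0).const_mul _)
      ((henv.mom s hs0).const_mul _),
    integral_const_mul, integral_const_mul, integral_const_mul, henv.mean, ← hm, ← hE] at hmono
  have hzero : m - (b:ℝ) * m * (1 / b) = 0 := by field_simp; ring
  have h1 : m * Real.log ((b:ℝ) * m) ≤ (s - 1) * E := by linarith
  have hEpos : 0 < E := by nlinarith
  nlinarith

end AuxLemmas

/-- For `1/2 < β < 1` and `W = η^β/𝔼[η^β]`, one has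
`inf_{1/2 ≤ t ≤ 1} log 𝔼[b^{1−t} W^{2t}]/(t log b) = 1 − 2ψ(β)/log b`; consequently,
since such `W` is squared super-critical, `D_F(W,b) = 2ψ(β)/log b`. -/
theorem statement15 {Ω : Type*} [MeasureSpace Ω] [IsProbabilityMeasure (ℙ : Measure Ω)]
    (b : ℕ) (η : Ω → ℝ) (henv : IsBoundaryEnv b η)
    (β : ℝ) (hβ1 : 1 / 2 < β) (hβ2 : β < 1)
    (W : Ω → ℝ) (hWdef : W = bkWeight η β) :
    (⨅ t : Set.Icc (1/2 : ℝ) 1,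
        Real.log (∫ ω, (b : ℝ) ^ (1 - (t : ℝ)) * (W ω) ^ (2 * (t : ℝ))) / ((t : ℝ) * Real.log b))
      = 1 - 2 * psiFun b η β / Real.log b ∧
    DF b W = 2 * psiFun b η β / Real.log b := by
  subst hWdef
  have hb2 : (2:ℝ) ≤ (b:ℝ) := by exact_mod_cast henv.two_le
  have hbpos : (0:ℝ) < b := by linarith
  have hL0 : 0 < Real.log (b:ℝ) := Real.log_pos (by linarith)
  have hβ0 : 0 < β := by linarith
  have hbinv : (0:ℝ) < 1 / b := by positivity
  have hMpos : ∀ s : ℝ, 0 < s → 0 < ∫ ω, η ω ^ s :=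
    fun s hs => lt_of_lt_of_le hbinv (aux_moment_ge henv hs)
  have hApos : 0 < ∫ ω', η ω' ^ β := hMpos β hβ0
  have hpsi : ∀ s : ℝ, 0 < s →
      psiFun b η s = Real.log (b:ℝ) + Real.log (∫ ω, η ω ^ s) := by
    intro s hs
    rw [psiFun, integral_const_mul, Real.log_mul hbpos.ne' (hMpos s hs).ne']
  have hpsi_nonneg : ∀ s : ℝ, 0 < s → 0 ≤ psiFun b η s := by
    intro s hs
    rw [psiFun, integral_const_mul]
    apply Real.log_nonneg
    calc (1:ℝ) = (b:ℝ) * (1 / b) := by field_simp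
      _ ≤ (b:ℝ) * ∫ ω, η ω ^ s :=
          mul_le_mul_of_nonneg_left (aux_moment_ge henv hs) hbpos.le
  have hpsi1 : psiFun b η 1 = 0 := by
    rw [psiFun]
    have he : (fun ω => (b:ℝ) * η ω ^ (1:ℝ)) = fun ω => (b:ℝ) * η ω := by
      funext ω; rw [Real.rpow_one]
    rw [he, integral_const_mul, henv.mean, mul_one_div, div_self hbpos.ne', Real.log_one]
  have hInt : ∀ t : ℝ, (∫ ω, (b:ℝ) ^ (1 - t) * (bkWeight η β ω) ^ (2 * t))
      = ((b:ℝ) ^ (1 - t) / (∫ ω', η ω' ^ β) ^ (2 * t)) * ∫ ω, η ω ^ (2 * t * β) := by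
    intro t
    rw [← integral_const_mul]
    congr 1; funext ω
    simp only [bkWeight]
    rw [Real.div_rpow (Real.rpow_nonneg (henv.nonneg ω) β) hApos.le,
      ← Real.rpow_mul (henv.nonneg ω), show β * (2 * t) = 2 * t * β from by ring]
    ring
  have hF : ∀ t : ℝ, 0 < t →
      Real.log (∫ ω, (b:ℝ) ^ (1 - t) * (bkWeight η β ω) ^ (2 * t))
        = (1 - t) * Real.log (b:ℝ) + Real.log (∫ ω, η ω ^ (2 * t * β))
          - 2 * t * Real.log (∫ ω', η ω' ^ β) := by
    intro t ht
    have hM2 : 0 < ∫ ω, η ω ^ (2 * t * β) := hMpos _ (by positivity)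
    have hb1 : 0 < (b:ℝ) ^ (1 - t) := Real.rpow_pos_of_pos hbpos _
    have hA1 : 0 < (∫ ω', η ω' ^ β) ^ (2 * t) := Real.rpow_pos_of_pos hApos _
    rw [hInt t, Real.log_mul (by positivity) hM2.ne', Real.log_div hb1.ne' hA1.ne',
      Real.log_rpow hbpos, Real.log_rpow hApos]
    ring
  have hbody : ∀ t : ℝ, 0 < t →
      Real.log (∫ ω, (b:ℝ) ^ (1 - t) * (bkWeight η β ω) ^ (2 * t)) / (t * Real.log (b:ℝ))
        = (1 - 2 * psiFun b η β / Real.log (b:ℝ))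
          + psiFun b η (2 * t * β) / (t * Real.log (b:ℝ)) := by
    intro t ht
    rw [hF t ht, hpsi β hβ0, hpsi (2 * t * β) (by positivity)]
    have h1 : t ≠ 0 := ht.ne'
    have h2 : Real.log (b:ℝ) ≠ 0 := hL0.ne'
    field_simp
    ring
  have ht0mem : 1 / (2 * β) ∈ Set.Icc (1/2 : ℝ) 1 := by
    constructor
    · rw [le_div_iff₀ (by positivity : (0:ℝ) < 2 * β)]; linarith
    · rw [div_le_one (by positivity : (0:ℝ) < 2 * β)]; linarith
  have hlow : ∀ t : ℝ, t ∈ Set.Icc (1/2 : ℝ) 1 →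
      1 - 2 * psiFun b η β / Real.log (b:ℝ)
        ≤ Real.log (∫ ω, (b:ℝ) ^ (1 - t) * (bkWeight η β ω) ^ (2 * t))
            / (t * Real.log (b:ℝ)) := by
    intro t ht
    have ht0 : 0 < t := lt_of_lt_of_le (by norm_num) ht.1
    rw [hbody t ht0]
    have h1 : 0 ≤ psiFun b η (2 * t * β) / (t * Real.log (b:ℝ)) :=
      div_nonneg (hpsi_nonneg _ (by positivity)) (by positivity)
    linarith
  have hval : Real.log (∫ ω, (b:ℝ) ^ (1 - (1 / (2 * β)))
        * (bkWeight η β ω) ^ (2 * (1 / (2 * β)))) / ((1 / (2 * β)) * Real.log (b:ℝ))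
      = 1 - 2 * psiFun b η β / Real.log (b:ℝ) := by
    rw [hbody _ (by positivity), show 2 * (1 / (2 * β)) * β = 1 from by field_simp,
      hpsi1, zero_div, add_zero]
  have key : (⨅ t : Set.Icc (1/2 : ℝ) 1,
      Real.log (∫ ω, (b : ℝ) ^ (1 - (t : ℝ)) * (bkWeight η β ω) ^ (2 * (t : ℝ)))
        / ((t : ℝ) * Real.log b)) = 1 - 2 * psiFun b η β / Real.log b := by
    haveI : Nonempty (Set.Icc (1/2 : ℝ) 1) := ⟨⟨1 / (2 * β), ht0mem⟩⟩
    apply le_antisymm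
    · have hbdd : BddBelow (Set.range fun t : Set.Icc (1/2 : ℝ) 1 =>
          Real.log (∫ ω, (b : ℝ) ^ (1 - (t : ℝ)) * (bkWeight η β ω) ^ (2 * (t : ℝ)))
            / ((t : ℝ) * Real.log b)) := by
        refine ⟨1 - 2 * psiFun b η β / Real.log b, ?_⟩
        rintro x ⟨t, rfl⟩
        exact hlow t t.2
      exact (ciInf_le hbdd ⟨1 / (2 * β), ht0mem⟩).trans_eq hval
    · exact le_ciInf fun t => hlow t t.2
  refine ⟨key, ?_⟩
  -- second part
  have hs2β : (1:ℝ) < 2 * β := by linarith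
  have hm2 : 0 < ∫ ω, η ω ^ (2 * β) := hMpos _ (by positivity)
  have hW2 : ∀ ω, (bkWeight η β ω) ^ 2 = η ω ^ (2 * β) / (∫ ω', η ω' ^ β) ^ 2 := by
    intro ω
    have hsq : (η ω ^ β) ^ (2:ℕ) = η ω ^ (2 * β) := by
      rw [← Real.rpow_natCast (η ω ^ β) 2, ← Real.rpow_mul (henv.nonneg ω)]
      norm_num [mul_comm]
    simp only [bkWeight]
    rw [div_pow, hsq]
  have heW2 : eW2 (bkWeight η β) = (∫ ω, η ω ^ (2 * β)) / (∫ ω', η ω' ^ β) ^ 2 := by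
    simp only [eW2, hW2]
    exact integral_div _ _
  have hE := aux_key_ineq henv hs2β
  have hptw : ∀ ω, (bkWeight η β ω) ^ 2 / eW2 (bkWeight η β)
        * Real.log ((bkWeight η β ω) ^ 2 / eW2 (bkWeight η β))
      = (2 * β / (∫ ω', η ω' ^ (2 * β))) * (η ω ^ (2 * β) * Real.log (η ω))
        - (Real.log (∫ ω', η ω' ^ (2 * β)) / (∫ ω', η ω' ^ (2 * β))) * η ω ^ (2 * β) := by
    intro ω
    have hx : (bkWeight η β ω) ^ 2 / eW2 (bkWeight η β)
        = η ω ^ (2 * β) / (∫ ω', η ω' ^ (2 * β)) := by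
      rw [hW2 ω, heW2]
      have h2 : ((∫ ω', η ω' ^ β) ^ 2 : ℝ) ≠ 0 := pow_ne_zero _ hApos.ne'
      field_simp
    rw [hx]
    rcases (henv.nonneg ω).eq_or_lt with h | h
    · rw [← h, Real.zero_rpow (by positivity : (2:ℝ) * β ≠ 0)]; simp
    · rw [Real.log_div (Real.rpow_pos_of_pos h _).ne' hm2.ne', Real.log_rpow h]
      ring
  have hcalc : sqLogMoment (bkWeight η β)
      = (2 * β) * (∫ ω, η ω ^ (2 * β) * Real.log (η ω)) / (∫ ω, η ω ^ (2 * β))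
        - Real.log (∫ ω, η ω ^ (2 * β)) := by
    unfold sqLogMoment
    simp only [hptw]
    rw [integral_sub ((aux_integrable_rpow_mul_log henv (by positivity : (0:ℝ) < 2 * β)).const_mul _)
        ((henv.mom _ (by positivity : (0:ℝ) < 2 * β)).const_mul _),
      integral_const_mul, integral_const_mul]
    field_simp
  have hsql : Real.log (b:ℝ) < sqLogMoment (bkWeight η β) := by
    rw [hcalc]
    rw [Real.log_mul hbpos.ne' hm2.ne'] at hE
    have h2 : Real.log (b:ℝ) + Real.log (∫ ω, η ω ^ (2 * β))
        < 2 * β * (∫ ω, η ω ^ (2 * β) * Real.log (η ω)) / (∫ ω, η ω ^ (2 * β)) := by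
      rw [lt_div_iff₀ hm2]
      nlinarith [hE]
    linarith
  unfold DF
  rw [if_neg (not_le.mpr hsql), key]
  ring

end MCCM
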